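/- Quadratic convergence of the population state evolution for alternating minimization in phase retrieval. Define S_pop : ℝ² → ℝ² on states (α, β) with α > 0, β ≥ 0 by S_pop(α, β) = ( 1 − (2φ − sin(2φ))/π , (2/π)·sin²(φ) ), where φ = arctan(β/α). Then: (i) S_pop(ζ) ∈ 𝔾 for every ζ ∈ 𝔾 (𝔾-faithfulness); and (ii) for every ζ ∈ 𝔾 and every integer t ≥ 1, (1/20)·[d_{ℓ₂}(S_pop^t(ζ))]² ≤ d_{ℓ₂}(S_pop^{t+1}(ζ)) ≤ [d_{ℓ₂}(S_pop^t(ζ))]². -/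

import Mathlib

noncomputable section

/-- The good region `𝔾 = {(α, β) : 0.55 ≤ α ≤ 1.05, 0 ≤ β ≤ α/5}`. -/
def goodRegion : Set (ℝ × ℝ) :=
  {p | 0.55 ≤ p.1 ∧ p.1 ≤ 1.05 ∧ 0 ≤ p.2 ∧ p.2 ≤ p.1 / 5}

/-- The ℓ₂ metric on states: `d_{ℓ₂}(α, β) = √((1−α)² + β²)`. -/
def dl2 (p : ℝ × ℝ) : ℝ := Real.sqrt ((1 - p.1) ^ 2 + p.2 ^ 2)

/-- Population state evolution for alternating minimization in phase retrieval. -/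
def Spop (p : ℝ × ℝ) : ℝ × ℝ :=
  (1 - (2 * Real.arctan (p.2 / p.1) - Real.sin (2 * Real.arctan (p.2 / p.1))) / Real.pi,
   2 / Real.pi * Real.sin (Real.arctan (p.2 / p.1)) ^ 2)

end

open Real


lemma arctan_nonneg' {x : ℝ} (hx : 0 ≤ x) : 0 ≤ arctan x := by
  have := Real.arctan_strictMono.monotone hx
  rwa [Real.arctan_zero] at this

lemma arctan_le_self' {x : ℝ} (hx : 0 ≤ x) : arctan x ≤ x := by
  rcases eq_or_lt_of_le hx with h | h
  · simp [← h, Real.arctan_zero]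
  · have h0 : 0 < arctan x := by
      have := Real.arctan_strictMono h
      rwa [Real.arctan_zero] at this
    have := Real.lt_tan h0 (Real.arctan_lt_pi_div_two x)
    rw [Real.tan_arctan] at this
    exact this.le

lemma sin_sq_arctan (x : ℝ) :
    Real.sin (Real.arctan x) ^ 2 = x ^ 2 / (1 + x ^ 2) := by
  rw [Real.sin_arctan, div_pow, Real.sq_sqrt (by positivity)]

lemma sub_sin_nonneg' {x : ℝ} (h0 : 0 ≤ x) : 0 ≤ 2 * x - Real.sin (2 * x) := by
  linarith [Real.sin_le (by linarith : (0:ℝ) ≤ 2 * x)]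

lemma sub_sin_le_cube' {x : ℝ} (h0 : 0 ≤ x) (h1 : x ≤ 0.2) :
    2 * x - Real.sin (2 * x) ≤ 2 * x ^ 3 := by
  rcases eq_or_lt_of_le h0 with h | h
  · simp [← h]
  · have := Real.sin_gt_sub_cube (x := 2 * x) (by linarith)
    nlinarith [pow_pos h 3]

lemma sin_lb' {x : ℝ} (h0 : 0 ≤ x) (h1 : x ≤ 0.2) : 0.99 * x ≤ Real.sin x := by
  rcases eq_or_lt_of_le h0 with h | h
  · simp [← h]
  · have := Real.sin_gt_sub_cube h
    nlinarith [mul_nonneg (mul_nonneg h0 (by linarith : (0:ℝ) ≤ 0.2 - x))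
      (by linarith : (0:ℝ) ≤ 0.2 + x)]

lemma key_ineq {x : ℝ} (h0 : 0 ≤ x) (h1 : x ≤ 0.2) :
    2 * (2 * x - Real.sin (2 * x)) ≤ Real.sin x ^ 2 := by
  have h2 := sub_sin_le_cube' h0 h1
  have h3 := sin_lb' h0 h1
  have h4 : (0.99 * x) ^ 2 ≤ Real.sin x ^ 2 := by
    apply pow_le_pow_left₀ (by positivity) h3
  nlinarith [sq_nonneg x, mul_nonneg (mul_nonneg h0 h0) h0]

lemma sub_sin_small {x : ℝ} (h0 : 0 ≤ x) (h1 : x ≤ 0.2) :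
    2 * x - Real.sin (2 * x) ≤ 0.016 := by
  have h2 := sub_sin_le_cube' h0 h1
  nlinarith [sq_nonneg x]

/-- Key structural bounds on the image of a good-region point under `Spop`. -/
lemma Spop_image {ζ : ℝ × ℝ} (hζ : ζ ∈ goodRegion) :
    0.99 ≤ (Spop ζ).1 ∧ (Spop ζ).1 ≤ 1 ∧ 0 ≤ (Spop ζ).2 ∧ (Spop ζ).2 ≤ 0.03 ∧
      1 - (Spop ζ).1 ≤ (Spop ζ).2 / 4 := by
  obtain ⟨a, b⟩ := ζ
  obtain ⟨ha1, ha2, hb1, hb2⟩ := hζ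
  simp only at ha1 ha2 hb1 hb2
  have ha0 : (0 : ℝ) < a := by linarith
  have hpi : (3.14 : ℝ) < π := by linarith [Real.pi_gt_d6]
  have hpi' : π < 3.15 := by linarith [Real.pi_lt_d2]
  have hπ0 : (0 : ℝ) < π := by linarith
  have hr0 : 0 ≤ b / a := div_nonneg hb1 ha0.le
  have hr2 : b / a ≤ 0.2 := by rw [div_le_iff₀ ha0]; linarith
  set φ := Real.arctan (b / a) with hφdef
  have hφ0 : 0 ≤ φ := arctan_nonneg' hr0
  have hφ2 : φ ≤ 0.2 := (arctan_le_self' hr0).trans hr2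
  have hS1 : (Spop (a, b)).1 = 1 - (2 * φ - Real.sin (2 * φ)) / π := rfl
  have hS2 : (Spop (a, b)).2 = 2 / π * Real.sin φ ^ 2 := rfl
  have hs0 : 0 ≤ Real.sin φ ^ 2 := sq_nonneg _
  have hs1 : Real.sin φ ^ 2 ≤ 0.04 := by
    rw [hφdef, _root_.sin_sq_arctan]
    rw [div_le_iff₀ (by positivity)]
    nlinarith
  have hu0 : 0 ≤ 2 * φ - Real.sin (2 * φ) := sub_sin_nonneg' hφ0
  have hu1 : 2 * φ - Real.sin (2 * φ) ≤ 0.016 := sub_sin_small hφ0 hφ2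
  have hud0 : 0 ≤ (2 * φ - Real.sin (2 * φ)) / π := div_nonneg hu0 hπ0.le
  have hud1 : (2 * φ - Real.sin (2 * φ)) / π ≤ 0.006 := by
    rw [div_le_iff₀ hπ0]; nlinarith
  refine ⟨by rw [hS1]; linarith, by rw [hS1]; linarith, ?_, ?_, ?_⟩
  · rw [hS2]; positivity
  · rw [hS2]
    have h1 : 2 / π * Real.sin φ ^ 2 ≤ 2 / π * 0.04 := by
      apply mul_le_mul_of_nonneg_left hs1 (by positivity)
    have h2 : 2 / π * (0.04 : ℝ) ≤ 0.03 := by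
      rw [div_mul_eq_mul_div, div_le_iff₀ hπ0]; nlinarith
    linarith
  · rw [hS1, hS2]
    have hkey := key_ineq hφ0 hφ2
    have h1 : (2 * φ - Real.sin (2 * φ)) / π ≤ (Real.sin φ ^ 2 / 2) / π := by
      gcongr
      linarith
    calc 1 - (1 - (2 * φ - Real.sin (2 * φ)) / π) = (2 * φ - Real.sin (2 * φ)) / π := by ring
      _ ≤ (Real.sin φ ^ 2 / 2) / π := h1
      _ = 2 / π * Real.sin φ ^ 2 / 4 := by ring

lemma Spop_faithful {ζ : ℝ × ℝ} (hζ : ζ ∈ goodRegion) : Spop ζ ∈ goodRegion := by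
  obtain ⟨h1, h2, h3, h4, _⟩ := Spop_image hζ
  exact ⟨by linarith, by linarith, h3, by linarith⟩


lemma v_bounds {a b v P : ℝ} (h1 : 0.99 ≤ a) (h2 : a ≤ 1) (h3 : 0 ≤ b) (h4 : b ≤ 0.03)
    (hP1 : 3.14 < P) (hP2 : P < 3.15) (hv0 : 0 ≤ v)
    (heq : v * (P * (a ^ 2 + b ^ 2)) = 2 * b ^ 2) :
    0.6 * b ^ 2 ≤ v ∧ v ≤ 0.66 * b ^ 2 := by
  have hab : a ^ 2 + b ^ 2 ≤ 1.001 := by nlinarith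
  have hab' : 0.98 ≤ a ^ 2 + b ^ 2 := by nlinarith
  have hps_ub : P * (a ^ 2 + b ^ 2) ≤ 3.16 := by nlinarith
  have hps_lb : (3.07 : ℝ) ≤ P * (a ^ 2 + b ^ 2) := by nlinarith
  constructor
  · nlinarith [mul_le_mul_of_nonneg_left hps_ub hv0]
  · nlinarith [mul_le_mul_of_nonneg_left hps_lb hv0]

lemma u_bound {b u x P : ℝ} (h3 : 0 ≤ b) (hx0 : 0 ≤ x) (hx2 : x ≤ 0.031) (hxb : 0.99 * x ≤ b)
    (hP1 : 3.14 < P) (hu0 : 0 ≤ u) (hueq : u * P ≤ 2 * x ^ 3) : u ≤ 0.03 * b ^ 2 := by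
  have hx3 : x ^ 3 ≤ 0.031 * x ^ 2 := by nlinarith [sq_nonneg x]
  have hx2' : 0.9801 * x ^ 2 ≤ b ^ 2 := by nlinarith
  have h6 : u * 3.14 ≤ u * P := by nlinarith
  nlinarith

lemma sum_sq_le {u v b : ℝ} (hu0 : 0 ≤ u) (hv0 : 0 ≤ v) (huub : u ≤ 0.03 * b ^ 2)
    (hvub : v ≤ 0.66 * b ^ 2) : u ^ 2 + v ^ 2 ≤ (b ^ 2) ^ 2 := by
  have e1 : u ^ 2 ≤ (0.03 * b ^ 2) ^ 2 := pow_le_pow_left₀ hu0 huub 2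
  have e2 : v ^ 2 ≤ (0.66 * b ^ 2) ^ 2 := pow_le_pow_left₀ hv0 hvub 2
  nlinarith [sq_nonneg (b ^ 2)]

lemma lower_arith {a b : ℝ} (h2 : a ≤ 1) (h5 : 1 - a ≤ b / 4) :
    1 / 20 * ((1 - a) ^ 2 + b ^ 2) ≤ 0.6 * b ^ 2 := by
  nlinarith [sq_nonneg (1 - a)]

/-- The one-step quadratic-convergence bounds for an image point. -/
lemma Spop_step {p : ℝ × ℝ} (h1 : 0.99 ≤ p.1) (h2 : p.1 ≤ 1) (h3 : 0 ≤ p.2)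
    (h4 : p.2 ≤ 0.03) (h5 : 1 - p.1 ≤ p.2 / 4) :
    1 / 20 * dl2 p ^ 2 ≤ dl2 (Spop p) ∧ dl2 (Spop p) ≤ dl2 p ^ 2 := by
  obtain ⟨a, b⟩ := p
  simp only at h1 h2 h3 h4 h5
  have ha0 : (0 : ℝ) < a := by linarith
  have hpi : (3.14 : ℝ) < π := by linarith [Real.pi_gt_d6]
  have hpi' : π < 3.15 := by linarith [Real.pi_lt_d2]
  have hπ0 : (0 : ℝ) < π := by linarith
  have hr0 : 0 ≤ b / a := div_nonneg h3 ha0.le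
  have hr2 : b / a ≤ b / 0.99 := by
    apply div_le_div_of_nonneg_left h3 (by norm_num) h1
  set φ := Real.arctan (b / a) with hφdef
  have hφ0 : 0 ≤ φ := arctan_nonneg' hr0
  have hφub : φ ≤ b / 0.99 := (arctan_le_self' hr0).trans hr2
  have hφb : 0.99 * φ ≤ b := by
    rw [le_div_iff₀ (by norm_num : (0:ℝ) < 0.99)] at hφub
    linarith
  have hφ2 : φ ≤ 0.031 := by
    have : b / 0.99 ≤ 0.031 := by rw [div_le_iff₀ (by norm_num : (0:ℝ) < 0.99)]; linarith
    linarith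
  have ha' : a ≠ 0 := ne_of_gt ha0
  have hs : Real.sin φ ^ 2 = b ^ 2 / (a ^ 2 + b ^ 2) := by
    rw [hφdef, _root_.sin_sq_arctan]
    rw [div_eq_div_iff (by positivity) (by positivity)]
    field_simp
  set v := 2 / π * Real.sin φ ^ 2 with hvdef
  set u := (2 * φ - Real.sin (2 * φ)) / π with hudef
  have hd2 : dl2 (a, b) ^ 2 = (1 - a) ^ 2 + b ^ 2 := Real.sq_sqrt (by positivity)
  have hdS : dl2 (Spop (a, b)) = Real.sqrt (u ^ 2 + v ^ 2) := by
    show Real.sqrt ((1 - (1 - u)) ^ 2 + v ^ 2) = _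
    rw [show (1 - (1 - u)) ^ 2 + v ^ 2 = u ^ 2 + v ^ 2 by ring]
  clear_value φ u v
  have hu0 : 0 ≤ u := by
    rw [hudef]; exact div_nonneg (sub_sin_nonneg' hφ0) hπ0.le
  have hv0 : 0 ≤ v := by rw [hvdef]; positivity
  have heq : v * (π * (a ^ 2 + b ^ 2)) = 2 * b ^ 2 := by
    rw [hvdef, hs]
    field_simp
  obtain ⟨hvlb, hvub⟩ := v_bounds h1 h2 h3 h4 hpi hpi' hv0 heq
  have hueq : u * π ≤ 2 * φ ^ 3 := by
    have hc := sub_sin_le_cube' hφ0 (by linarith : φ ≤ 0.2)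
    have he : u * π = 2 * φ - Real.sin (2 * φ) := by rw [hudef]; field_simp
    linarith
  have huub : u ≤ 0.03 * b ^ 2 := u_bound h3 hφ0 hφ2 hφb hpi hu0 hueq
  have hsumub : u ^ 2 + v ^ 2 ≤ (b ^ 2) ^ 2 := sum_sq_le hu0 hv0 huub hvub
  constructor
  · have hlb : v ≤ dl2 (Spop (a, b)) := by
      rw [hdS]
      calc v = Real.sqrt (v ^ 2) := (Real.sqrt_sq hv0).symm
        _ ≤ Real.sqrt (u ^ 2 + v ^ 2) := Real.sqrt_le_sqrt (by linarith [sq_nonneg u])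
    have h7 : 1 / 20 * dl2 (a, b) ^ 2 ≤ 0.6 * b ^ 2 := by
      rw [hd2]; exact lower_arith h2 h5
    linarith
  · rw [hdS, hd2]
    have h8 : Real.sqrt (u ^ 2 + v ^ 2) ≤ b ^ 2 := by
      calc Real.sqrt (u ^ 2 + v ^ 2) ≤ Real.sqrt ((b ^ 2) ^ 2) := Real.sqrt_le_sqrt hsumub
        _ = b ^ 2 := Real.sqrt_sq (sq_nonneg b)
    linarith [sq_nonneg (1 - a)]

theorem population_state_evolution_quadratic_convergence :
    (∀ ζ ∈ goodRegion, Spop ζ ∈ goodRegion) ∧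
    ∀ ζ ∈ goodRegion, ∀ t : ℕ, 1 ≤ t →
      1 / 20 * dl2 (Spop^[t] ζ) ^ 2 ≤ dl2 (Spop^[t + 1] ζ) ∧
      dl2 (Spop^[t + 1] ζ) ≤ dl2 (Spop^[t] ζ) ^ 2 := by
  refine ⟨fun ζ hζ => Spop_faithful hζ, ?_⟩
  intro ζ hζ t ht
  have hiter : ∀ n, Spop^[n] ζ ∈ goodRegion := by
    intro n
    induction n with
    | zero => simpa using hζ
    | succ n ih => rw [Function.iterate_succ_apply']; exact Spop_faithful ih
  obtain ⟨s, rfl⟩ : ∃ s, t = s + 1 := ⟨t - 1, by omega⟩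
  have hpeq : Spop^[s + 1] ζ = Spop (Spop^[s] ζ) := Function.iterate_succ_apply' _ _ _
  have himg := Spop_image (hiter s)
  rw [← hpeq] at himg
  obtain ⟨i1, i2, i3, i4, i5⟩ := himg
  have := Spop_step i1 i2 i3 i4 i5
  rwa [← Function.iterate_succ_apply' Spop (s + 1) ζ] at this
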